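/- Let X be a uniform space and μ ∈ Meas(X). Then μ is a uniform measure if and only if for every uniform space Y, every ν ∈ Meas(Y) and every semiuniform f : X × Y → ℝ, the function y ↦ μ(x ↦ f(x,y)) belongs to Ub(Y) and μ(x ↦ ν(y ↦ f(x,y))) = ν(y ↦ μ(x ↦ f(x,y))). -/

import Mathlib

noncomputable section

open Filter Topology

/-- `f` is a bounded uniformly continuous real-valued function,
i.e. a member of `Ub(X)`. -/
def IsUb {X : Type*} [UniformSpace X] (f : X → ℝ) : Prop :=
  UniformContinuous f ∧ ∃ C : ℝ, ∀ x, |f x| ≤ C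

/-- Supremum norm of a real-valued function. -/
def supNorm {α : Type*} (f : α → ℝ) : ℝ :=
  sSup (Set.range fun x => |f x|)

/-- `μ` is (the restriction to `Ub(X)` of) a norm-continuous linear functional on `Ub(X)`,
i.e. a member of `Meas(X)`.  It is represented as a bare map on all functions;
only its values on `Ub(X)` are relevant. -/
def IsMeas {X : Type*} [UniformSpace X] (μ : (X → ℝ) → ℝ) : Prop :=
  (∀ f g : X → ℝ, IsUb f → IsUb g → μ (f + g) = μ f + μ g) ∧
  (∀ (c : ℝ) (f : X → ℝ), IsUb f → μ (c • f) = c * μ f) ∧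
  (∃ C : ℝ, ∀ f : X → ℝ, IsUb f → (∀ x, |f x| ≤ 1) → |μ f| ≤ C)

/-- The dual norm on `Meas(X)`:  `‖μ‖ = sup {|μ f| : f ∈ Ub(X), ‖f‖ ≤ 1}`. -/
def measNorm {X : Type*} [UniformSpace X] (μ : (X → ℝ) → ℝ) : ℝ :=
  sSup {r : ℝ | ∃ f : X → ℝ, IsUb f ∧ (∀ x, |f x| ≤ 1) ∧ r = |μ f|}

/-- `μ` is a positive functional:  `μ f ≥ 0` whenever `f ∈ Ub(X)` and `f ≥ 0`. -/
def IsPositive {X : Type*} [UniformSpace X] (μ : (X → ℝ) → ℝ) : Prop :=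
  ∀ f : X → ℝ, IsUb f → (∀ x, 0 ≤ f x) → 0 ≤ μ f

/-- `μ` is a *uniform measure*: on every norm-bounded uniformly equicontinuous set
`H ⊆ Ub(X)`, `μ` is continuous for the topology of pointwise convergence. -/
def IsUniformMeasure {X : Type*} [UniformSpace X] (μ : (X → ℝ) → ℝ) : Prop :=
  ∀ H : Set (X → ℝ),
    (∃ C : ℝ, ∀ f ∈ H, ∀ x, |f x| ≤ C) →
    H.UniformEquicontinuous →
    ∀ f₀ ∈ H, ∀ ε : ℝ, 0 < ε →
      ∃ (K : Finset X) (δ : ℝ), 0 < δ ∧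
        ∀ f ∈ H, (∀ x ∈ K, |f x - f₀ x| < δ) → |μ f - μ f₀| < ε

/-- A *semiuniform* function on `X × Y`, i.e. a member of `Ub(X ⋉ Y)` where `X ⋉ Y` is the
semiuniform product: `f` is bounded, the family of sections `x ↦ f (x, y)` (for `y ∈ Y`)
is uniformly equicontinuous on `X`, and every section `y ↦ f (x, y)` is uniformly
continuous on `Y`. -/
def Semiuniform {X Y : Type*} [UniformSpace X] [UniformSpace Y] (f : X × Y → ℝ) : Prop :=
  (∃ C : ℝ, ∀ p, |f p| ≤ C) ∧
  UniformEquicontinuous (fun y : Y => fun x : X => f (x, y)) ∧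
  ∀ x : X, UniformContinuous fun y : Y => f (x, y)

/-- The direct product `μ ⊗ ν`, evaluated at `f : X × Y → ℝ`:
`(μ ⊗ ν)(f) = μ (x ↦ ν (y ↦ f (x, y)))`. -/
def dirProd {X Y : Type*} (μ : (X → ℝ) → ℝ) (ν : (Y → ℝ) → ℝ) (f : X × Y → ℝ) : ℝ :=
  μ fun x => ν fun y => f (x, y)

/-- Convolution: `(μ ⋆ ν)(f) = μ (x ↦ ν (y ↦ f (x · y)))`. -/
def conv {G : Type*} [Mul G] (μ ν : (G → ℝ) → ℝ) : (G → ℝ) → ℝ :=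
  fun f => μ fun x => ν fun y => f (x * y)

/-- The weak-* topology on `Meas(X)`: the topology of pointwise convergence on `Ub(X)`. -/
def weakStarMeas (X : Type*) [UniformSpace X] :
    TopologicalSpace {ν : (X → ℝ) → ℝ // IsMeas ν} :=
  TopologicalSpace.induced
    (fun ν => fun f : {f : X → ℝ // IsUb f} => ν.1 f.1) Pi.topologicalSpace

universe u

section Helpers

variable {X : Type*} [UniformSpace X]

lemma isUb_const (c : ℝ) : IsUb (fun _ : X => c) :=
  ⟨uniformContinuous_const, ⟨|c|, fun _ => le_rfl⟩⟩

lemma isUb_zero : IsUb (0 : X → ℝ) := isUb_const 0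

lemma IsUb.add {f g : X → ℝ} (hf : IsUb f) (hg : IsUb g) : IsUb (f + g) := by
  obtain ⟨hfc, Cf, hCf⟩ := hf
  obtain ⟨hgc, Cg, hCg⟩ := hg
  exact ⟨hfc.add hgc, ⟨Cf + Cg, fun x => (abs_add_le _ _).trans (add_le_add (hCf x) (hCg x))⟩⟩

lemma IsUb.mul_const {f : X → ℝ} (c : ℝ) (hf : IsUb f) : IsUb (fun x => c * f x) := by
  obtain ⟨hfc, Cf, hCf⟩ := hf
  refine ⟨(uniformContinuous_const_smul c).comp hfc, ⟨|c| * Cf, fun x => ?_⟩⟩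
  rw [abs_mul]
  exact mul_le_mul_of_nonneg_left (hCf x) (abs_nonneg c)

lemma IsUb.neg {f : X → ℝ} (hf : IsUb f) : IsUb (fun x => -f x) := by
  have h := hf.mul_const (-1)
  simpa only [neg_one_mul] using h

lemma IsUb.sub {f g : X → ℝ} (hf : IsUb f) (hg : IsUb g) : IsUb (fun x => f x - g x) := by
  simpa [sub_eq_add_neg, Pi.add_def] using hf.add hg.neg

lemma isUb_sum {ι : Type*} (s : Finset ι) (h : ι → X → ℝ) (hh : ∀ j ∈ s, IsUb (h j)) :
    IsUb (fun x => ∑ j ∈ s, h j x) := by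
  classical
  induction s using Finset.induction_on with
  | empty => simpa using isUb_const (X := X) 0
  | insert _ _ hnot ih =>
    rename_i a s
    simp only [Finset.sum_insert hnot]
    exact (hh a (Finset.mem_insert_self a s)).add
      (ih fun j hj => hh j (Finset.mem_insert_of_mem hj))

variable {μ : (X → ℝ) → ℝ}

lemma meas_smul (hμ : IsMeas μ) {f : X → ℝ} (hf : IsUb f) (c : ℝ) :
    μ (fun x => c * f x) = c * μ f := by
  have := hμ.2.1 c f hf
  simpa [Pi.smul_def, smul_eq_mul] using this

lemma meas_zero (hμ : IsMeas μ) : μ 0 = 0 := by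
  have h := meas_smul hμ (isUb_zero (X := X)) 0
  simpa [Pi.zero_def] using h

lemma meas_add (hμ : IsMeas μ) {f g : X → ℝ} (hf : IsUb f) (hg : IsUb g) :
    μ (fun x => f x + g x) = μ f + μ g :=
  hμ.1 f g hf hg

lemma meas_sub (hμ : IsMeas μ) {f g : X → ℝ} (hf : IsUb f) (hg : IsUb g) :
    μ (fun x => f x - g x) = μ f - μ g := by
  have hneg : μ (fun x => -g x) = -μ g := by
    have h := meas_smul hμ hg (-1)
    simpa only [neg_one_mul] using h
  have := meas_add hμ hf hg.neg
  simp only [sub_eq_add_neg, this, hneg]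

lemma meas_sum (hμ : IsMeas μ) {ι : Type*} (s : Finset ι) (h : ι → X → ℝ)
    (hh : ∀ j ∈ s, IsUb (h j)) :
    μ (fun x => ∑ j ∈ s, h j x) = ∑ j ∈ s, μ (h j) := by
  classical
  induction s using Finset.induction_on with
  | empty => simpa [Pi.zero_def] using meas_zero hμ
  | insert _ _ hnot ih =>
    rename_i a s
    simp only [Finset.sum_insert hnot]
    rw [meas_add hμ (hh a (Finset.mem_insert_self a s))
      (isUb_sum s h fun j hj => hh j (Finset.mem_insert_of_mem hj)),
      ih fun j hj => hh j (Finset.mem_insert_of_mem hj)]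

lemma meas_bound (hμ : IsMeas μ) :
    ∃ C : ℝ, 0 ≤ C ∧ ∀ f : X → ℝ, IsUb f → ∀ M : ℝ, 0 ≤ M → (∀ x, |f x| ≤ M) → |μ f| ≤ C * M := by
  obtain ⟨C, hC⟩ := hμ.2.2
  refine ⟨max C 0, le_max_right _ _, fun f hf M hM hfM => ?_⟩
  rcases eq_or_lt_of_le hM with hM0 | hM0
  · have : f = 0 := funext fun x => abs_nonpos_iff.1 (by simpa [← hM0] using hfM x)
    simp [this, meas_zero hμ, ← hM0]
  · have h1 : IsUb (fun x => (1 / M) * f x) := hf.mul_const _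
    have h2 : ∀ x, |(1 / M) * f x| ≤ 1 := by
      intro x
      rw [abs_mul, abs_of_pos (by positivity : (0:ℝ) < 1 / M)]
      rw [div_mul_eq_mul_div, one_mul, div_le_one hM0]
      exact hfM x
    have h3 := hC _ h1 h2
    have h4 : μ (fun x => (1 / M) * f x) = (1 / M) * μ f := meas_smul hμ hf _
    rw [h4, abs_mul, abs_of_pos (by positivity : (0:ℝ) < 1 / M)] at h3
    calc |μ f| = M * ((1 / M) * |μ f|) := by field_simp
    _ ≤ M * C := mul_le_mul_of_nonneg_left h3 hM0.le
    _ ≤ max C 0 * M := by rw [mul_comm]; exact mul_le_mul_of_nonneg_right (le_max_left _ _) hM0.le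

end Helpers
section LemA

variable {X : Type*} [UniformSpace X]

lemma isUb_of_memUEB {H : Set (X → ℝ)} {C : ℝ} (hC : ∀ f ∈ H, ∀ x, |f x| ≤ C)
    (he : H.UniformEquicontinuous) {f : X → ℝ} (hf : f ∈ H) : IsUb f :=
  ⟨he.uniformContinuous ⟨f, hf⟩, C, hC f hf⟩

lemma unifMeasure_unif {μ : (X → ℝ) → ℝ} (hμ : IsMeas μ)
    (hu : IsUniformMeasure μ) (H : Set (X → ℝ)) (hb : ∃ C, ∀ f ∈ H, ∀ x, |f x| ≤ C)
    (he : H.UniformEquicontinuous) {ε : ℝ} (hε : 0 < ε) :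
    ∃ (K : Finset X) (δ : ℝ), 0 < δ ∧
      ∀ f ∈ H, ∀ g ∈ H, (∀ x ∈ K, |f x - g x| < δ) → |μ f - μ g| < ε := by
  rcases Set.eq_empty_or_nonempty H with hHe | ⟨f₁, hf₁⟩
  · exact ⟨∅, 1, one_pos, by simp [hHe]⟩
  obtain ⟨C, hC⟩ := hb
  set D : Set (X → ℝ) := {d | ∃ f ∈ H, ∃ g ∈ H, d = fun x => f x - g x} with hD
  have hDb : ∃ C', ∀ d ∈ D, ∀ x, |d x| ≤ C' := by
    refine ⟨C + C, ?_⟩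
    rintro d ⟨f, hf, g, hg, rfl⟩ x
    exact (abs_sub _ _).trans (add_le_add (hC f hf x) (hC g hg x))
  have hDe : D.UniformEquicontinuous := by
    apply Metric.uniformEquicontinuous_iff_right.2
    intro ε' hε'
    have h2 := Metric.uniformEquicontinuous_iff_right.1 he (ε'/2) (by positivity)
    filter_upwards [h2] with p hp
    rintro ⟨d, f, hf, g, hg, rfl⟩
    have h3 := hp ⟨f, hf⟩
    have h4 := hp ⟨g, hg⟩
    simp only [Real.dist_eq] at h3 h4 ⊢
    have heq : (f p.1 - g p.1) - (f p.2 - g p.2) = (f p.1 - f p.2) - (g p.1 - g p.2) := by ring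
    rw [heq]
    calc |(f p.1 - f p.2) - (g p.1 - g p.2)| ≤ |f p.1 - f p.2| + |g p.1 - g p.2| :=
        abs_sub _ _
    _ < ε'/2 + ε'/2 := add_lt_add h3 h4
    _ = ε' := by ring
  have hf₁Ub : IsUb f₁ := isUb_of_memUEB hC he hf₁
  set d₀ : X → ℝ := fun x => f₁ x - f₁ x with hd₀
  have hd₀D : d₀ ∈ D := ⟨f₁, hf₁, f₁, hf₁, rfl⟩
  have hd₀0 : d₀ = 0 := by funext x; simp [hd₀]
  obtain ⟨K, δ, hδ, hKδ⟩ := hu D hDb hDe d₀ hd₀D ε hε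
  refine ⟨K, δ, hδ, fun f hf g hg hfg => ?_⟩
  have hfUb : IsUb f := isUb_of_memUEB hC he hf
  have hgUb : IsUb g := isUb_of_memUEB hC he hg
  have hdD : (fun x => f x - g x) ∈ D := ⟨f, hf, g, hg, rfl⟩
  have h5 := hKδ _ hdD (fun x hx => by
    simpa [hd₀] using hfg x hx)
  rw [meas_sub hμ hfUb hgUb] at h5
  have h6 : μ d₀ = 0 := by rw [hd₀0]; exact meas_zero hμ
  simpa [h6] using h5
end LemA
section LemB

lemma meas_approx {Y : Type*} [UniformSpace Y] [Nonempty Y] {ν : (Y → ℝ) → ℝ} (hν : IsMeas ν)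
    {C : ℝ} (hC0 : 0 ≤ C)
    (hCb : ∀ h : Y → ℝ, IsUb h → ∀ M : ℝ, 0 ≤ M → (∀ y, |h y| ≤ M) → |ν h| ≤ C * M)
    {ι' : Type*} [Fintype ι'] (h : ι' → Y → ℝ) (hh : ∀ i, IsUb (h i)) {η : ℝ} (hη : 0 < η) :
    ∃ (m : ℕ) (c : Fin m → ℝ) (y : Fin m → Y),
      (∑ j, |c j|) ≤ C ∧ ∀ i, |(∑ j, c j * h i (y j)) - ν (h i)| < η := by
  classical
  rcases eq_or_lt_of_le hC0 with hC0' | hCpos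
  · -- C = 0 : ν vanishes on Ub functions
    refine ⟨0, Fin.elim0, Fin.elim0, by simp [← hC0'], fun i => ?_⟩
    obtain ⟨B, hB⟩ := (hh i).2
    have : |ν (h i)| ≤ C * max B 0 :=
      hCb _ (hh i) _ (le_max_right _ _) fun y => (hB y).trans (le_max_left _ _)
    rw [← hC0'] at this
    simp only [zero_mul] at this
    have h0 : ν (h i) = 0 := abs_nonpos_iff.1 this
    simpa [h0] using hη
  -- C > 0
  set S₀ : Set (ι' → ℝ) :=
    {v | ∃ s : ℝ, ∃ y : Y, |s| ≤ C ∧ v = fun i => s * h i y} with hS₀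
  set T : ι' → ℝ := fun i => ν (h i) with hT
  have h0S : (0 : ι' → ℝ) ∈ S₀ := by
    refine ⟨0, Classical.arbitrary Y, by simpa using hC0, ?_⟩
    funext i; simp
  have key : T ∈ closure (convexHull ℝ S₀) := by
    by_contra hTc
    obtain ⟨L, u, hLa, hLT⟩ :=
      geometric_hahn_banach_closed_point ((convex_convexHull ℝ S₀).closure)
        isClosed_closure hTc
    have hsingle : ∀ (v : ι' → ℝ) (i), Pi.single i (v i) = v i • (Pi.single i 1 : ι' → ℝ) := by
      intro v i; funext k; by_cases hk : k = i <;> simp [Pi.single_apply, hk]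
    have hLv : ∀ v : ι' → ℝ, L v = ∑ i, v i * L (Pi.single i 1) := by
      intro v
      conv_lhs => rw [← Finset.univ_sum_single v]
      rw [map_sum]
      refine Finset.sum_congr rfl fun i _ => ?_
      rw [hsingle v i, map_smul, smul_eq_mul]
    set hb : Y → ℝ := fun y => ∑ i, L (Pi.single i 1) * h i y with hhb
    have hbUb : IsUb hb := isUb_sum Finset.univ _ (fun i _ => (hh i).mul_const _)
    have hu0 : 0 < u := by
      have := hLa 0 (subset_closure (subset_convexHull ℝ S₀ h0S))
      simpa using this
    have hbd : ∀ y : Y, C * |hb y| ≤ u := by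
      intro y
      have hv1 : (fun i => C * h i y) ∈ S₀ := ⟨C, y, by rw [abs_of_nonneg hC0], rfl⟩
      have hv2 : (fun i => -C * h i y) ∈ S₀ := ⟨-C, y, by rw [abs_neg, abs_of_nonneg hC0], rfl⟩
      have e1 : L (fun i => C * h i y) = C * hb y := by
        rw [hLv, hhb, Finset.mul_sum]
        exact Finset.sum_congr rfl fun i _ => by ring
      have e2 : L (fun i => -C * h i y) = -(C * hb y) := by
        rw [hLv, hhb]
        simp only [neg_mul, ← Finset.sum_neg_distrib, Finset.mul_sum]
        exact Finset.sum_congr rfl fun i _ => by ring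
      have l1 := hLa _ (subset_closure (subset_convexHull ℝ S₀ hv1))
      have l2 := hLa _ (subset_closure (subset_convexHull ℝ S₀ hv2))
      rw [e1] at l1; rw [e2] at l2
      have : |C * hb y| ≤ u := abs_le.2 ⟨by linarith, l1.le⟩
      rwa [abs_mul, abs_of_nonneg hC0] at this
    have hMb : ∀ y : Y, |hb y| ≤ u / C := fun y =>
      (le_div_iff₀' hCpos).2 (hbd y)
    have hνhb : |ν hb| ≤ u := by
      have := hCb hb hbUb (u / C) (by positivity) hMb
      rwa [mul_div_cancel₀ _ (ne_of_gt hCpos)] at this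
    have hLT' : L T = ν hb := by
      rw [hLv]
      have : ν hb = ∑ i, L (Pi.single i 1) * ν (h i) := by
        rw [hhb, meas_sum hν Finset.univ _ (fun i _ => (hh i).mul_const _)]
        exact Finset.sum_congr rfl fun i _ => meas_smul hν (hh i) _
      rw [this]
      exact Finset.sum_congr rfl fun i _ => by rw [hT]; ring
    rw [hLT'] at hLT
    have : ν hb ≤ u := (le_abs_self _).trans hνhb
    linarith
  obtain ⟨b, hbmem, hdist⟩ := Metric.mem_closure_iff.1 key η hη
  rw [convexHull_eq] at hbmem
  obtain ⟨ι, t, w, z, hw0, hw1, hzS, hcm⟩ := hbmem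
  have hbsum : b = ∑ i ∈ t, w i • z i := by
    rw [← hcm, Finset.centerMass_eq_of_sum_1 _ _ hw1]
  have hchoice : ∀ i ∈ t, ∃ s : ℝ, ∃ y : Y, |s| ≤ C ∧ z i = fun k => s * h k y := hzS
  choose! s yy hs hz using hchoice
  set m := t.card with hm
  set e := t.equivFin with he
  refine ⟨m, fun j => w ((e.symm j) : ι) * s ((e.symm j) : ι),
    fun j => yy ((e.symm j) : ι), ?_, ?_⟩
  · have htrans : ∀ F : ι → ℝ, (∑ j : Fin m, F ((e.symm j) : ι)) = ∑ i ∈ t, F i := by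
      intro F
      rw [Equiv.sum_comp e.symm (fun i : t => F (i : ι)), Finset.sum_coe_sort]
    rw [htrans (fun i => |w i * s i|)]
    calc (∑ i ∈ t, |w i * s i|) ≤ ∑ i ∈ t, w i * C := by
          refine Finset.sum_le_sum fun i hi => ?_
          rw [abs_mul, abs_of_nonneg (hw0 i hi)]
          exact mul_le_mul_of_nonneg_left (hs i hi) (hw0 i hi)
    _ = C := by rw [← Finset.sum_mul, hw1, one_mul]
  · intro i
    have htrans : ∀ F : ι → ℝ, (∑ j : Fin m, F ((e.symm j) : ι)) = ∑ i ∈ t, F i := by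
      intro F
      rw [Equiv.sum_comp e.symm (fun i : t => F (i : ι)), Finset.sum_coe_sort]
    have hbi : b i = ∑ k ∈ t, w k * s k * h i (yy k) := by
      rw [hbsum, Finset.sum_apply]
      refine Finset.sum_congr rfl fun k hk => ?_
      rw [Pi.smul_apply, congrFun (hz k hk) i, smul_eq_mul]; ring
    have hsumeq : (∑ j : Fin m, w ((e.symm j) : ι) * s ((e.symm j) : ι) * h i (yy ((e.symm j) : ι)))
        = b i := by
      rw [hbi, htrans (fun k => w k * s k * h i (yy k))]
    rw [hsumeq]
    have := dist_le_pi_dist T b i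
    rw [Real.dist_eq] at this
    have h2 : |T i - b i| < η := lt_of_le_of_lt this hdist
    rw [abs_sub_comm] at h2
    exact h2

end LemB
section Backward

open Uniformity

lemma backward_dir {X : Type u} [UniformSpace X] {μ : (X → ℝ) → ℝ}
    (hR : ∀ (Y : Type u) [UniformSpace Y] (ν : (Y → ℝ) → ℝ), IsMeas ν →
        ∀ f : X × Y → ℝ, Semiuniform f →
          IsUb (fun y => μ fun x => f (x, y)) ∧
            μ (fun x => ν fun y => f (x, y)) = ν fun y => μ fun x => f (x, y)) :
    IsUniformMeasure μ := by
  classical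
  intro H hbdd hHe f₀ hf₀ ε hε
  obtain ⟨C, hC⟩ := hbdd
  set Y := {h : X → ℝ // h ∈ H} with hY
  set F : X × Y → ℝ := fun p => p.2.1 p.1 with hF
  have hFsemi : Semiuniform F := by
    refine ⟨⟨C, fun p => hC p.2.1 p.2.2 p.1⟩, hHe, fun x => ?_⟩
    exact (Pi.uniformContinuous_proj _ x).comp uniformContinuous_subtype_val
  set ν : (Y → ℝ) → ℝ := fun φ => φ ⟨f₀, hf₀⟩ with hν
  have hνM : IsMeas ν :=
    ⟨fun f g _ _ => rfl, fun c f _ => rfl, ⟨1, fun f _ hf => by simpa using hf _⟩⟩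
  obtain ⟨⟨hgUC, -⟩, -⟩ := hR Y ν hνM F hFsemi
  have hS : {p : Y × Y | dist (μ fun x => p.1.1 x) (μ fun x => p.2.1 x) < ε} ∈ 𝓤 Y := by
    have h1 := hgUC (Metric.dist_mem_uniformity hε)
    exact Filter.mem_map.1 h1
  rw [uniformity_subtype] at hS
  obtain ⟨t, ht, htsub⟩ := Filter.mem_comap.1 hS
  rw [Pi.uniformity] at ht
  obtain ⟨I, hIfin, V, hV, -, htEq, -⟩ := Filter.mem_iInf'.1 ht
  have hW : ∀ x : X, ∃ W ∈ 𝓤 ℝ, (fun a : (X → ℝ) × (X → ℝ) => (a.1 x, a.2 x)) ⁻¹' W ⊆ V x :=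
    fun x => Filter.mem_comap.1 (hV x)
  choose W hWmem hWsub using hW
  have hδ : ∀ x : X, ∃ δ : ℝ, 0 < δ ∧ ∀ a b : ℝ, dist a b < δ → (a, b) ∈ W x := by
    intro x
    obtain ⟨δ, hδ0, hδ⟩ := Metric.mem_uniformity_dist.1 (hWmem x)
    exact ⟨δ, hδ0, fun a b hab => hδ hab⟩
  choose δ hδpos hδW using hδ
  set K : Finset X := hIfin.toFinset with hK
  by_cases hKne : K.Nonempty
  · refine ⟨K, K.inf' hKne δ, ?_, ?_⟩
    · rw [Finset.lt_inf'_iff]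
      exact fun x _ => hδpos x
    · intro f hf hclose
      have hft : (f, f₀) ∈ t := by
        rw [htEq]
        refine Set.mem_iInter₂.2 fun x hxI => ?_
        have hxK : x ∈ K := hIfin.mem_toFinset.2 hxI
        have h2 : |f x - f₀ x| < K.inf' hKne δ := hclose x hxK
        have h3 : dist (f x) (f₀ x) < δ x :=
          lt_of_lt_of_le (by rwa [Real.dist_eq]) (Finset.inf'_le _ hxK)
        exact hWsub x (hδW x _ _ h3)
      have := @htsub (⟨f, hf⟩, ⟨f₀, hf₀⟩) hft
      rw [Set.mem_setOf_eq, Real.dist_eq] at this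
      convert this using 3 <;> rfl
  · refine ⟨K, 1, one_pos, fun f hf _ => ?_⟩
    have hft : (f, f₀) ∈ t := by
      rw [htEq]
      refine Set.mem_iInter₂.2 fun x hxI => ?_
      exact absurd (hIfin.mem_toFinset.2 hxI) (fun hxK => hKne ⟨x, hxK⟩)
    have := @htsub (⟨f, hf⟩, ⟨f₀, hf₀⟩) hft
    rw [Set.mem_setOf_eq, Real.dist_eq] at this
    convert this using 3 <;> rfl

end Backward
section Forward

open Uniformity

variable {X : Type*} [UniformSpace X]

lemma forward_part1 {μ : (X → ℝ) → ℝ} (hμ : IsMeas μ) (hu : IsUniformMeasure μ)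
    {Y : Type*} [UniformSpace Y] {f : X × Y → ℝ} (hf : Semiuniform f) :
    IsUb (fun y => μ fun x => f (x, y)) := by
  obtain ⟨⟨Cf, hCf⟩, hsec, hyc⟩ := hf
  obtain ⟨Cμ, hCμ0, hCμ⟩ := meas_bound hμ
  have hsecUb : ∀ y, IsUb (fun x => f (x, y)) := fun y =>
    ⟨hsec.uniformContinuous y, Cf, fun x => hCf (x, y)⟩
  constructor
  · rw [UniformContinuous, Metric.uniformity_basis_dist.tendsto_right_iff]
    intro ε hε
    set H₀ : Set (X → ℝ) := Set.range (fun y : Y => fun x => f (x, y)) with hH₀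
    have hb : ∃ C, ∀ g ∈ H₀, ∀ x, |g x| ≤ C := by
      refine ⟨Cf, ?_⟩
      rintro g ⟨y, rfl⟩ x
      exact hCf (x, y)
    have he : H₀.UniformEquicontinuous := by
      intro U hU
      filter_upwards [hsec U hU] with p hp
      rintro ⟨g, y, rfl⟩
      exact hp y
    obtain ⟨K, δ, hδ, hKδ⟩ := unifMeasure_unif hμ hu H₀ hb he hε
    have hEv : ∀ᶠ p : Y × Y in 𝓤 Y, ∀ x ∈ K, dist (f (x, p.1)) (f (x, p.2)) < δ := by
      rw [Filter.eventually_all_finset]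
      intro x _
      exact Filter.mem_map.1 ((hyc x) (Metric.dist_mem_uniformity hδ))
    filter_upwards [hEv] with p hp
    have h1 := hKδ _ (⟨p.1, rfl⟩ : (fun x => f (x, p.1)) ∈ H₀) _
      (⟨p.2, rfl⟩ : (fun x => f (x, p.2)) ∈ H₀)
      (fun x hx => by have := hp x hx; rwa [Real.dist_eq] at this)
    simpa [Real.dist_eq] using h1
  · exact ⟨Cμ * max Cf 0, fun y => hCμ _ (hsecUb y) _ (le_max_right _ _)
      fun x => (hCf (x, y)).trans (le_max_left _ _)⟩

end Forward
section Forward2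

open Uniformity

variable {X : Type*} [UniformSpace X]

lemma forward_part2 {μ : (X → ℝ) → ℝ} (hμ : IsMeas μ) (hu : IsUniformMeasure μ)
    {Y : Type*} [UniformSpace Y] {ν : (Y → ℝ) → ℝ} (hν : IsMeas ν)
    {f : X × Y → ℝ} (hf : Semiuniform f)
    (hgUb : IsUb (fun y => μ fun x => f (x, y))) :
    μ (fun x => ν fun y => f (x, y)) = ν fun y => μ fun x => f (x, y) := by
  classical
  rcases isEmpty_or_nonempty Y with hY | hY
  · -- degenerate case : Y is empty
    have huniq : ∀ φ ψ : Y → ℝ, φ = ψ := fun φ ψ => funext fun y => (IsEmpty.false y).elim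
    have hub : ∀ φ : Y → ℝ, IsUb φ := by
      intro φ
      rw [huniq φ 0]
      exact isUb_zero
    have hν0 : ∀ φ : Y → ℝ, ν φ = 0 := by
      intro φ
      have h1 := hν.1 φ φ (hub φ) (hub φ)
      rw [huniq (φ + φ) φ] at h1
      linarith
    have h2 : (fun x => ν fun y => f (x, y)) = (0 : X → ℝ) := funext fun x => hν0 _
    rw [h2, meas_zero hμ, hν0]
  -- main case
  obtain ⟨⟨Cf, hCf⟩, hsec, hyc⟩ := hf
  obtain ⟨Cν, hCν0, hCν⟩ := meas_bound hν
  set g : Y → ℝ := fun y => μ fun x => f (x, y) with hg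
  set Fν : X → ℝ := fun x => ν fun y => f (x, y) with hFν
  have hsecUb : ∀ y, IsUb (fun x => f (x, y)) := fun y =>
    ⟨hsec.uniformContinuous y, Cf, fun x => hCf (x, y)⟩
  have hysecUb : ∀ x, IsUb (fun y => f (x, y)) := fun x => ⟨hyc x, Cf, fun y => hCf (x, y)⟩
  set Cf' := max Cf 0 with hCf'def
  have hCf0 : (0:ℝ) ≤ Cf' := le_max_right _ _
  have hCf' : ∀ p, |f p| ≤ Cf' := fun p => (hCf p).trans (le_max_left _ _)
  set H : Set (X → ℝ) := insert Fν {φ | ∃ (m : ℕ) (c : Fin m → ℝ) (y : Fin m → Y),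
      (∑ j, |c j|) ≤ Cν ∧ φ = fun x => ∑ j, c j * f (x, y j)} with hH
  have hHb : ∃ C, ∀ φ ∈ H, ∀ x, |φ x| ≤ C := by
    refine ⟨Cν * Cf', ?_⟩
    rintro φ (rfl | ⟨m, c, y, hc, rfl⟩) x
    · exact hCν _ (hysecUb x) Cf' hCf0 fun y => hCf' (x, y)
    · calc |∑ j, c j * f (x, y j)| ≤ ∑ j, |c j * f (x, y j)| := Finset.abs_sum_le_sum_abs _ _
      _ ≤ ∑ j, |c j| * Cf' := Finset.sum_le_sum fun j _ => by
          rw [abs_mul]; exact mul_le_mul_of_nonneg_left (hCf' _) (abs_nonneg _)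
      _ = (∑ j, |c j|) * Cf' := (Finset.sum_mul _ _ _).symm
      _ ≤ Cν * Cf' := mul_le_mul_of_nonneg_right hc hCf0
  have hε'key : ∀ ε : ℝ, 0 < ε → Cν * (ε / (Cν + 1)) < ε := by
    intro ε hε
    have h6 : Cν * (ε / (Cν + 1)) < (Cν + 1) * (ε / (Cν + 1)) :=
      mul_lt_mul_of_pos_right (by linarith) (by positivity)
    rwa [mul_div_cancel₀ _ (by linarith : Cν + 1 ≠ 0)] at h6
  have hHe : H.UniformEquicontinuous := by
    apply Metric.uniformEquicontinuous_iff_right.2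
    intro ε hε
    have hε' : 0 < ε / (Cν + 1) := by positivity
    filter_upwards [Metric.uniformEquicontinuous_iff_right.1 hsec (ε / (Cν + 1)) hε']
      with p hp
    rintro ⟨φ, (rfl | ⟨m, c, y, hc, rfl⟩)⟩
    · simp only [Real.dist_eq] at hp ⊢
      have hdiff : ∀ y, |f (p.1, y) - f (p.2, y)| ≤ ε / (Cν + 1) := fun y => (hp y).le
      have hUb : IsUb (fun y => f (p.1, y) - f (p.2, y)) := (hysecUb p.1).sub (hysecUb p.2)
      have h3 : |ν (fun y => f (p.1, y) - f (p.2, y))| ≤ Cν * (ε / (Cν + 1)) :=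
        hCν _ hUb _ hε'.le hdiff
      have h4 : ν (fun y => f (p.1, y) - f (p.2, y)) = Fν p.1 - Fν p.2 :=
        meas_sub hν (hysecUb p.1) (hysecUb p.2)
      rw [h4] at h3
      exact lt_of_le_of_lt h3 (hε'key ε hε)
    · simp only [Real.dist_eq] at hp ⊢
      have heq : (∑ j, c j * f (p.1, y j)) - (∑ j, c j * f (p.2, y j))
          = ∑ j, c j * (f (p.1, y j) - f (p.2, y j)) := by
        rw [← Finset.sum_sub_distrib]
        exact Finset.sum_congr rfl fun j _ => by ring
      rw [heq]
      calc |∑ j, c j * (f (p.1, y j) - f (p.2, y j))|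
          ≤ ∑ j, |c j * (f (p.1, y j) - f (p.2, y j))| := Finset.abs_sum_le_sum_abs _ _
        _ ≤ ∑ j, |c j| * (ε / (Cν + 1)) := Finset.sum_le_sum fun j _ => by
            rw [abs_mul]
            refine mul_le_mul_of_nonneg_left ?_ (abs_nonneg _)
            exact (hp (y j)).le
        _ = (∑ j, |c j|) * (ε / (Cν + 1)) := (Finset.sum_mul _ _ _).symm
        _ ≤ Cν * (ε / (Cν + 1)) := mul_le_mul_of_nonneg_right hc hε'.le
        _ < ε := hε'key ε hε
  have hFνH : Fν ∈ H := Set.mem_insert _ _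
  have hclose : ∀ ε : ℝ, 0 < ε → |μ Fν - ν g| < ε := by
    intro ε hε
    obtain ⟨K, δ, hδ, hKδ⟩ := hu H hHb hHe Fν hFνH (ε / 2) (by positivity)
    set κ := Option {x : X // x ∈ K} with hκ
    set h : κ → Y → ℝ := fun i => Option.elim i g (fun x => fun y => f (x.1, y)) with hhdef
    have hhUb : ∀ i, IsUb (h i) := by
      rintro (_ | x)
      · exact hgUb
      · exact hysecUb x.1
    obtain ⟨m, c, y, hcsum, happrox⟩ :=
      meas_approx hν hCν0 hCν h hhUb (η := min δ (ε / 2)) (lt_min hδ (by positivity))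
    set φ : X → ℝ := fun x => ∑ j, c j * f (x, y j) with hφ
    have hφH : φ ∈ H := Set.mem_insert_of_mem _ ⟨m, c, y, hcsum, rfl⟩
    have h1 : ∀ x ∈ K, |φ x - Fν x| < δ := by
      intro x hx
      have h2 := happrox (some ⟨x, hx⟩)
      simp only [hhdef, Option.elim] at h2
      exact lt_of_lt_of_le h2 (min_le_left _ _)
    have h2 := hKδ φ hφH h1
    have h3 : μ φ = ∑ j, c j * g (y j) := by
      rw [hφ]
      rw [meas_sum hμ Finset.univ (fun j => fun x => c j * f (x, y j))
        (fun j _ => (hsecUb (y j)).mul_const _)]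
      exact Finset.sum_congr rfl fun j _ => meas_smul hμ (hsecUb (y j)) (c j)
    have h4 := happrox none
    simp only [hhdef, Option.elim] at h4
    have h5 : |(∑ j, c j * g (y j)) - ν g| < ε / 2 := lt_of_lt_of_le h4 (min_le_right _ _)
    rw [h3] at h2
    calc |μ Fν - ν g| ≤ |μ Fν - ∑ j, c j * g (y j)| + |(∑ j, c j * g (y j)) - ν g| :=
        abs_sub_le _ _ _
      _ < ε / 2 + ε / 2 := add_lt_add (by rwa [abs_sub_comm] at h2) h5
      _ = ε := by ring
  by_contra hne
  have hpos : 0 < |μ Fν - ν g| := abs_pos.2 (sub_ne_zero.2 hne)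
  exact absurd (hclose _ hpos) (lt_irrefl _)

end Forward2
theorem stmt8 {X : Type u} [UniformSpace X] (μ : (X → ℝ) → ℝ) (hμ : IsMeas μ) :
    IsUniformMeasure μ ↔
      ∀ (Y : Type u) [UniformSpace Y] (ν : (Y → ℝ) → ℝ), IsMeas ν →
        ∀ f : X × Y → ℝ, Semiuniform f →
          IsUb (fun y => μ fun x => f (x, y)) ∧
            μ (fun x => ν fun y => f (x, y)) = ν fun y => μ fun x => f (x, y) := by
  constructor
  · intro hu Y _ ν hν f hf
    have h1 := forward_part1 hμ hu hf
    exact ⟨h1, forward_part2 hμ hu hν hf h1⟩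
  · exact backward_dir
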